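/- Let x₁,…,x_N, v₁,…,v_N : [0,∞) → ℝ^d solve the Cucker–Smale system x_i' = v_i, v_i' = (1/N)·∑_{j=1}^N χ_{ij}(t)·φ(‖x_j - x_i‖)·(v_j - v_i), where χ_{ij}(t) ∈ {0,1} and φ ≥ 0. Then the velocity diameter D(V)(t) := max_{i,j} ‖v_i(t) - v_j(t)‖ is non-increasing in t. -/

import Mathlib

open Filter Topology Finset
open scoped RealInnerProductSpace

/-- Max of finitely many differentiable functions whose derivative is `≤ 0` at argmax points
is nonincreasing. -/
lemma sup'_nonincreasing {ι : Type*} [Fintype ι] [Nonempty ι]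
    (g g' : ι → ℝ → ℝ) (hg : ∀ i t, HasDerivAt (g i) (g' i t) t)
    (hd : ∀ t i, (∀ j, g j t ≤ g i t) → g' i t ≤ 0)
    {s t : ℝ} (hst : s ≤ t) :
    Finset.univ.sup' Finset.univ_nonempty (fun i => g i t) ≤
    Finset.univ.sup' Finset.univ_nonempty (fun i => g i s) := by
  set M : ℝ → ℝ := fun τ => Finset.univ.sup' Finset.univ_nonempty (fun i => g i τ) with hM
  have hgc : ∀ i, Continuous (g i) := by
    intro i
    exact continuous_iff_continuousAt.2 fun τ => (hg i τ).continuousAt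
  have hMc : Continuous M :=
    Continuous.finset_sup'_apply Finset.univ_nonempty (fun i _ => hgc i)
  have key := le_gronwallBound_of_liminf_deriv_right_le (f := M) (f' := fun _ => 0)
    (δ := M s) (K := 0) (ε := 0) (a := s) (b := t) hMc.continuousOn ?_ le_rfl ?_
  · have h2 : M t ≤ M s := by simpa [gronwallBound] using key t ⟨hst, le_rfl⟩
    exact h2
  · -- slope condition
    intro τ hτ r hr
    change (0:ℝ) < r at hr
    have hev : ∀ᶠ z in 𝓝[>] τ, ∀ i, (z - τ)⁻¹ * (g i z - M τ) < r := by
      rw [Filter.eventually_all]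
      intro i
      have hle : g i τ ≤ M τ := Finset.le_sup' (fun j => g j τ) (Finset.mem_univ i)
      rcases eq_or_lt_of_le hle with heq | hlt
      · -- argmax: use derivative
        have hd' : g' i τ < r := lt_of_le_of_lt (hd τ i (fun j => by
          calc g j τ ≤ M τ := Finset.le_sup' (fun j => g j τ) (Finset.mem_univ j)
          _ = g i τ := heq.symm)) hr
        have hslope : ∀ᶠ z in 𝓝[≠] τ, slope (g i) τ z < r :=
          (hasDerivAt_iff_tendsto_slope.1 (hg i τ)).eventually_lt_const hd'
        have hsub : 𝓝[>] τ ≤ 𝓝[≠] τ :=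
          nhdsWithin_mono τ fun z hz => ne_of_gt hz
        filter_upwards [hsub hslope, self_mem_nhdsWithin] with z hz hz'
        have hzτ : (τ:ℝ) < z := hz'
        rw [slope_def_field] at hz
        rw [← heq]
        calc (z - τ)⁻¹ * (g i z - g i τ) = (g i z - g i τ) / (z - τ) := by ring
        _ < r := hz
      · -- sub-max: continuity
        have : ∀ᶠ z in 𝓝[>] τ, g i z < M τ :=
          eventually_nhdsWithin_of_eventually_nhds
            ((hgc i).continuousAt.eventually_lt continuousAt_const hlt)
        filter_upwards [this, self_mem_nhdsWithin] with z hz hz'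
        have hzpos : 0 < z - τ := sub_pos.2 hz'
        have : (z - τ)⁻¹ * (g i z - M τ) < 0 :=
          mul_neg_of_pos_of_neg (inv_pos.2 hzpos) (sub_neg.2 hz)
        linarith
    refine (hev.mono ?_).frequently
    intro z hz
    obtain ⟨i, -, hi⟩ := Finset.exists_mem_eq_sup' (Finset.univ_nonempty) (fun i => g i z)
    calc (z - τ)⁻¹ * (M z - M τ) = (z - τ)⁻¹ * (g i z - M τ) := by rw [hM]; simp [hi]
    _ < r := hz i
  · intro τ hτ
    simp
section InnerAux
variable {E : Type*} [NormedAddCommGroup E] [InnerProductSpace ℝ E]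

lemma inner_aux_le_zero (a b c : E) (h : ‖c - b‖^2 ≤ ‖a - b‖^2) :
    ⟪c - a, a - b⟫ ≤ 0 := by
  have hexp : ‖c - b‖^2 = ‖c - a‖^2 + 2 * ⟪c - a, a - b⟫ + ‖a - b‖^2 := by
    rw [show c - b = (c - a) + (a - b) by abel]
    exact norm_add_sq_real _ _
  nlinarith [sq_nonneg ‖c - a‖]

lemma inner_aux_nonneg (a b c : E) (h : ‖a - c‖^2 ≤ ‖a - b‖^2) :
    0 ≤ ⟪c - b, a - b⟫ := by
  have hexp : ‖a - c‖^2 = ‖a - b‖^2 - 2 * ⟪a - b, c - b⟫ + ‖c - b‖^2 := by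
    rw [show a - c = (a - b) - (c - b) by abel]
    exact norm_sub_sq_real _ _
  rw [real_inner_comm]
  nlinarith [sq_nonneg ‖c - b‖]

end InnerAux

theorem velocity_diameter_nonincreasing {N d : ℕ} (hN : 0 < N)
    (x v : Fin N → ℝ → EuclideanSpace ℝ (Fin d))
    (χ : Fin N → Fin N → ℝ → ℝ) (hχ : ∀ i j t, χ i j t = 0 ∨ χ i j t = 1)
    (φ : ℝ → ℝ) (hφ : ∀ r, 0 ≤ φ r)
    (hx : ∀ i t, HasDerivAt (x i) (v i t) t)
    (hv : ∀ i t, HasDerivAt (v i)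
      ((N : ℝ)⁻¹ • ∑ j : Fin N, (χ i j t * φ ‖x j t - x i t‖) • (v j t - v i t)) t) :
    ∀ s t : ℝ, 0 ≤ s → s ≤ t →
      (⨆ p : Fin N × Fin N, ‖v p.1 t - v p.2 t‖) ≤
      (⨆ p : Fin N × Fin N, ‖v p.1 s - v p.2 s‖) := by
  haveI : Nonempty (Fin N) := ⟨⟨0, hN⟩⟩
  intro s t _ hst
  set c : Fin N → Fin N → ℝ → ℝ := fun i j τ => χ i j τ * φ ‖x j τ - x i τ‖ with hcdef
  have hc : ∀ i j τ, 0 ≤ c i j τ := by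
    intro i j τ
    rcases hχ i j τ with h | h <;> simp [hcdef, h, hφ]
  set w : Fin N × Fin N → ℝ → EuclideanSpace ℝ (Fin d) := fun p τ =>
    ((N : ℝ)⁻¹ • ∑ k : Fin N, (c p.1 k τ) • (v k τ - v p.1 τ)) -
    ((N : ℝ)⁻¹ • ∑ k : Fin N, (c p.2 k τ) • (v k τ - v p.2 τ)) with hwdef
  set g : Fin N × Fin N → ℝ → ℝ := fun p τ =>
    ⟪v p.1 τ - v p.2 τ, v p.1 τ - v p.2 τ⟫ with hgdef
  set g' : Fin N × Fin N → ℝ → ℝ := fun p τ =>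
    ⟪v p.1 τ - v p.2 τ, w p τ⟫ + ⟪w p τ, v p.1 τ - v p.2 τ⟫ with hg'def
  have hu : ∀ p τ, HasDerivAt (fun τ => v p.1 τ - v p.2 τ) (w p τ) τ :=
    fun p τ => (hv p.1 τ).sub (hv p.2 τ)
  have hg : ∀ p τ, HasDerivAt (g p) (g' p τ) τ := fun p τ => (hu p τ).inner ℝ (hu p τ)
  have hgnorm : ∀ p τ, g p τ = ‖v p.1 τ - v p.2 τ‖^2 := fun p τ =>
    real_inner_self_eq_norm_sq _
  have hd : ∀ τ p, (∀ q, g q τ ≤ g p τ) → g' p τ ≤ 0 := by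
    intro τ p hmax
    have hmax' : ∀ k l : Fin N, ‖v k τ - v l τ‖^2 ≤ ‖v p.1 τ - v p.2 τ‖^2 := by
      intro k l
      have := hmax (k, l)
      rwa [hgnorm, hgnorm] at this
    have hwu : ⟪w p τ, v p.1 τ - v p.2 τ⟫ ≤ 0 := by
      have h1 : (∑ k : Fin N, ⟪(c p.1 k τ) • (v k τ - v p.1 τ), v p.1 τ - v p.2 τ⟫) ≤ 0 := by
        apply Finset.sum_nonpos
        intro k _
        rw [real_inner_smul_left]
        exact mul_nonpos_of_nonneg_of_nonpos (hc _ _ _)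
          (inner_aux_le_zero _ _ _ (hmax' k p.2))
      have h2 : 0 ≤ (∑ k : Fin N, ⟪(c p.2 k τ) • (v k τ - v p.2 τ), v p.1 τ - v p.2 τ⟫) := by
        apply Finset.sum_nonneg
        intro k _
        rw [real_inner_smul_left]
        exact mul_nonneg (hc _ _ _) (inner_aux_nonneg _ _ _ (hmax' p.1 k))
      have hNinv : (0:ℝ) ≤ (N : ℝ)⁻¹ := by positivity
      have hrw : ⟪w p τ, v p.1 τ - v p.2 τ⟫ =
          (N : ℝ)⁻¹ * (∑ k : Fin N, ⟪(c p.1 k τ) • (v k τ - v p.1 τ), v p.1 τ - v p.2 τ⟫) -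
          (N : ℝ)⁻¹ * (∑ k : Fin N, ⟪(c p.2 k τ) • (v k τ - v p.2 τ), v p.1 τ - v p.2 τ⟫) := by
        rw [hwdef]
        rw [inner_sub_left, real_inner_smul_left, real_inner_smul_left, sum_inner, sum_inner]
      rw [hrw]
      have t1 := mul_nonpos_of_nonneg_of_nonpos hNinv h1
      have t2 := mul_nonneg hNinv h2
      linarith
    have huw : ⟪v p.1 τ - v p.2 τ, w p τ⟫ ≤ 0 := by rwa [real_inner_comm]
    rw [hg'def]
    exact add_nonpos huw hwu
  have hsup := sup'_nonincreasing g g' hg hd hst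
  have hDs : (0:ℝ) ≤ ⨆ p : Fin N × Fin N, ‖v p.1 s - v p.2 s‖ :=
    le_trans (norm_nonneg _) (le_ciSup (f := fun p : Fin N × Fin N => ‖v p.1 s - v p.2 s‖)
      (Set.Finite.bddAbove (Set.finite_range _)) (Classical.arbitrary (Fin N × Fin N)))
  apply ciSup_le
  intro p
  obtain ⟨q, -, hq⟩ := Finset.exists_mem_eq_sup' (Finset.univ_nonempty)
    (fun i : Fin N × Fin N => g i s)
  have h1 : g p t ≤ g q s := by
    calc g p t ≤ Finset.univ.sup' Finset.univ_nonempty (fun i => g i t) :=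
          Finset.le_sup' (fun i : Fin N × Fin N => g i t) (Finset.mem_univ p)
    _ ≤ Finset.univ.sup' Finset.univ_nonempty (fun i => g i s) := hsup
    _ = g q s := hq
  have h2 : ‖v q.1 s - v q.2 s‖ ≤ ⨆ p : Fin N × Fin N, ‖v p.1 s - v p.2 s‖ :=
    le_ciSup (f := fun p : Fin N × Fin N => ‖v p.1 s - v p.2 s‖)
      (Set.Finite.bddAbove (Set.finite_range _)) q
  rw [hgnorm, hgnorm] at h1
  nlinarith [norm_nonneg (v p.1 t - v p.2 t), norm_nonneg (v q.1 s - v q.2 s)]
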